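/- Let n be a positive integer. If a Boolean algebra A is n-free over X (X generates A and every n-preserving function from X into any nontrivial Boolean algebra extends to a homomorphism), then the set of nonzero elements of X is n-independent. -/

import Mathlib

open scoped Classical

variable {A : Type*}

/-- ω-independence: `⊥ ∉ X`, (⊥1), (⊥3). -/
def OmegaIndep [BooleanAlgebra A] (X : Set A) : Prop :=
  (⊥ : A) ∉ X ∧
  (∀ F : Finset A, F.Nonempty → ↑F ⊆ X → F.sup id ≠ ⊤) ∧
  (∀ F G : Finset A, F.Nonempty → G.Nonempty → ↑F ⊆ X → ↑G ⊆ X →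
      F.inf id ≠ ⊥ → F.inf id ≤ G.sup id → (F ∩ G).Nonempty)

/-- n-independence: `⊥ ∉ X`, (⊥1), (⊥2)_n, (⊥3); `n = ⊤` codes ω. -/
def NIndep [BooleanAlgebra A] (n : ℕ∞) (X : Set A) : Prop :=
  (⊥ : A) ∉ X ∧
  (∀ F : Finset A, F.Nonempty → ↑F ⊆ X → F.sup id ≠ ⊤) ∧
  (∀ F : Finset A, F.Nonempty → ↑F ⊆ X → F.inf id = ⊥ →
      ∃ F' ⊆ F, (F'.card : ℕ∞) ≤ n ∧ F'.inf id = ⊥) ∧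
  (∀ F G : Finset A, F.Nonempty → G.Nonempty → ↑F ⊆ X → ↑G ⊆ X →
      F.inf id ≠ ⊥ → F.inf id ≤ G.sup id → (F ∩ G).Nonempty)

/-- Elementary product `∏_{x ∈ R} x^{ε x}`. -/
def elemProd [BooleanAlgebra A] (R : Finset A) (ε : A → Bool) : A :=
  R.inf (fun x => if ε x then x else xᶜ)

/-- `f` is n-preserving on `X` (`n = ⊤` codes ω-preserving). -/
def NPreserving [BooleanAlgebra A] {B : Type*} [BooleanAlgebra B]
    (n : ℕ∞) (X : Set A) (f : A → B) : Prop :=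
  ∀ F : Finset A, ↑F ⊆ X → (F.card : ℕ∞) ≤ n → F.inf id = ⊥ → F.inf f = ⊥

/-- Membership in the subalgebra generated by `X`. -/
inductive Gen [BooleanAlgebra A] (X : Set A) : A → Prop
  | of {x : A} : x ∈ X → Gen X x
  | bot : Gen X ⊥
  | top : Gen X ⊤
  | inf {x y : A} : Gen X x → Gen X y → Gen X (x ⊓ y)
  | sup {x y : A} : Gen X x → Gen X y → Gen X (x ⊔ y)
  | compl {x : A} : Gen X x → Gen X xᶜ

/-- `X` generates the Boolean algebra `A`. -/
def Generates [BooleanAlgebra A] (X : Set A) : Prop := ∀ a : A, Gen X a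

universe w

noncomputable instance : Max (ULift.{w} Bool) := ⟨fun a b => ⟨max a.down b.down⟩⟩
noncomputable instance : Min (ULift.{w} Bool) := ⟨fun a b => ⟨min a.down b.down⟩⟩
noncomputable instance : Top (ULift.{w} Bool) := ⟨⟨⊤⟩⟩
noncomputable instance : Bot (ULift.{w} Bool) := ⟨⟨⊥⟩⟩
noncomputable instance : HasCompl (ULift.{w} Bool) := ⟨fun a => ⟨a.downᶜ⟩⟩
noncomputable instance : SDiff (ULift.{w} Bool) := ⟨fun a b => ⟨a.down \ b.down⟩⟩
noncomputable instance : HImp (ULift.{w} Bool) := ⟨fun a b => ⟨a.down ⇨ b.down⟩⟩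
noncomputable instance : BooleanAlgebra (ULift.{w} Bool) :=
  ULift.down_injective.booleanAlgebra _ Iff.rfl Iff.rfl (fun _ _ => rfl) (fun _ _ => rfl) rfl rfl
    (fun _ => rfl) (fun _ _ => rfl) (fun _ _ => rfl)
noncomputable instance : Nontrivial (ULift.{w} Bool) :=
  ⟨⟨⟨false⟩, ⟨true⟩, fun h => by simpa using congrArg ULift.down h⟩⟩

/-- if `A` is n-free over `X` for a positive integer `n`, then the
nonzero elements of `X` form an n-independent set. -/
theorem stmt_6.{u, v} {A : Type u} [BooleanAlgebra A] (n : ℕ) (hn : 0 < n) (X : Set A)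
    (hgen : Generates X)
    (hfree : ∀ (B : Type v) [BooleanAlgebra B] [Nontrivial B] (f : A → B),
        NPreserving (n : ℕ∞) X f →
        ∃ g : BoundedLatticeHom A B, ∀ x ∈ X, g x = f x) :
    NIndep (n : ℕ∞) (X \ {⊥}) := by
  classical
  refine ⟨fun h => h.2 rfl, ?_, ?_, ?_⟩
  · -- (⊥1)
    intro F hFne hFX hsup
    obtain ⟨a, haF⟩ := hFne
    have hA : Nontrivial A := ⟨⊥, a, fun h => (hFX haF).2 h.symm⟩
    have hpres : NPreserving (n : ℕ∞) X (fun _ : A => (⊥ : ULift.{v} Bool)) := by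
      intro H hHX hHc hHinf
      rcases H.eq_empty_or_nonempty with rfl | hHne
      · simp at hHinf
      · exact Finset.inf_const hHne _
    obtain ⟨g, hg⟩ := hfree (ULift.{v} Bool) _ hpres
    have h1 : g (F.sup id) = F.sup (fun x => g x) := by
      simpa only [Function.comp_def, id] using map_finset_sup g F id
    rw [hsup, map_top] at h1
    have h2 : F.sup (fun x => g x) = ⊥ := by
      rw [Finset.sup_eq_bot_iff]
      intro x hx
      exact hg x (hFX hx).1
    rw [h2] at h1
    exact top_ne_bot h1
  · -- (⊥2)_n
    intro F hFne hFX hFinf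
    by_contra hcon
    push_neg at hcon
    obtain ⟨a, haF⟩ := hFne
    have hA : Nontrivial A := ⟨⊥, a, fun h => (hFX haF).2 h.symm⟩
    have hpres : NPreserving (n : ℕ∞) X
        (fun x : A => if x ∈ F then (⊤ : ULift.{v} Bool) else ⊥) := by
      intro H hHX hHc hHinf
      by_cases hHF : ∀ x ∈ H, x ∈ F
      · exact absurd hHinf (hcon H (fun x hx => hHF x hx) hHc)
      · push_neg at hHF
        obtain ⟨x, hxH, hxF⟩ := hHF
        refine le_bot_iff.mp (le_trans (Finset.inf_le hxH) ?_)
        simp [hxF]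
    obtain ⟨g, hg⟩ := hfree (ULift.{v} Bool) _ hpres
    have h1 : g (F.inf id) = F.inf (fun x => g x) := by
      simpa only [Function.comp_def, id] using map_finset_inf g F id
    rw [hFinf, map_bot] at h1
    have h2 : F.inf (fun x => g x) = ⊤ := by
      rw [Finset.inf_eq_top_iff]
      intro x hx
      rw [hg x (hFX hx).1]
      simp [hx]
    rw [h2] at h1
    exact top_ne_bot h1.symm
  · -- (⊥3)
    intro F G hFne hGne hFX hGX hFbot hle
    by_contra hcon
    rw [Finset.not_nonempty_iff_eq_empty] at hcon
    obtain ⟨a, haF⟩ := hFne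
    have hA : Nontrivial A := ⟨⊥, a, fun h => (hFX haF).2 h.symm⟩
    have hpres : NPreserving (n : ℕ∞) X
        (fun x : A => if x ∈ F then (⊤ : ULift.{v} Bool) else ⊥) := by
      intro H hHX hHc hHinf
      by_cases hHF : ∀ x ∈ H, x ∈ F
      · exact absurd (le_bot_iff.mp
          (le_trans (Finset.inf_mono (fun x hx => hHF x hx)) hHinf.le)) hFbot
      · push_neg at hHF
        obtain ⟨x, hxH, hxF⟩ := hHF
        refine le_bot_iff.mp (le_trans (Finset.inf_le hxH) ?_)
        simp [hxF]
    obtain ⟨g, hg⟩ := hfree (ULift.{v} Bool) _ hpres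
    have h1 : g (F.inf id) = F.inf (fun x => g x) := by
      simpa only [Function.comp_def, id] using map_finset_inf g F id
    have h2 : F.inf (fun x => g x) = ⊤ := by
      rw [Finset.inf_eq_top_iff]
      intro x hx
      rw [hg x (hFX hx).1]; simp [hx]
    have h3 : g (G.sup id) = G.sup (fun x => g x) := by
      simpa only [Function.comp_def, id] using map_finset_sup g G id
    have h4 : G.sup (fun x => g x) = ⊥ := by
      rw [Finset.sup_eq_bot_iff]
      intro x hx
      have hxF : x ∉ F := fun hxF =>
        Finset.notMem_empty x (hcon ▸ Finset.mem_inter.mpr ⟨hxF, hx⟩)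
      rw [hg x (hGX hx).1]; simp [hxF]
    have hmono : g (F.inf id) ≤ g (G.sup id) := OrderHomClass.mono g hle
    rw [h1, h2, h3, h4] at hmono
    exact top_ne_bot (le_bot_iff.mp hmono)
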